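/- Let a reaction network N be given by α, β ∈ ℕ^{n×ν} with Γ = β − α, admissible Jacobian set 𝒦, and r = rank Γ. Assume N has no catalytic reactions (for all i, j, not both α_{ij} > 0 and β_{ij} > 0). Let Ñ be obtained from N by reversing a reaction j: α̃ ∈ ℕ^{n×(ν+1)} agrees with α on the first ν columns and its column ν+1 equals column j of β, while β̃ agrees with β on the first ν columns and its column ν+1 equals column j of α; set Γ̃ = β̃ − α̃, r̃ = rank Γ̃, and let 𝒦̃ be the admissible Jacobian set of Ñ. Assume: N is robustly P0; N is robustly non-degenerate; and Ñ is robustly P0. Then Ñ is robustly non-degenerate: for every Ṽ ∈ 𝒦̃ the sum of all r̃×r̃ principal minors of −Γ̃Ṽ is nonzero. -/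

import Mathlib

open Matrix Finset

/-- The principal minor of a square matrix `M` indexed by the set `I`. -/
noncomputable def principalMinor {n : ℕ} (M : Matrix (Fin n) (Fin n) ℝ) (I : Finset (Fin n)) : ℝ :=
  (M.submatrix (fun i : {x // x ∈ I} => (i : Fin n)) (fun i : {x // x ∈ I} => (i : Fin n))).det

/-- The sum of all `r × r` principal minors of the square matrix `M`. -/
noncomputable def sumMinors {n : ℕ} (r : ℕ) (M : Matrix (Fin n) (Fin n) ℝ) : ℝ :=
  ∑ I ∈ Finset.univ.powersetCard r, principalMinor M I

/-- The admissible Jacobian set: `V j i > 0` whenever `X i` is a reactant of reaction `j`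
    (i.e. `α i j > 0`) and `V j i = 0` otherwise. -/
def admissible {n ν : ℕ} (α : Matrix (Fin n) (Fin ν) ℕ) (V : Matrix (Fin ν) (Fin n) ℝ) : Prop :=
  ∀ i j, (0 < α i j → 0 < V j i) ∧ (α i j = 0 → V j i = 0)

/-- The stoichiometry matrix `Γ = β - α` (entries cast to `ℝ`). -/
def gam {n ν : ℕ} (α β : Matrix (Fin n) (Fin ν) ℕ) : Matrix (Fin n) (Fin ν) ℝ :=
  fun i j => (β i j : ℝ) - (α i j : ℝ)

lemma det_add_aux {m : Type*} [Fintype m] [DecidableEq m]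
    (A : Matrix m m ℝ) (u v : m → ℝ) (ε : ℝ) :
    (Matrix.of fun i k => A i k + ε * u i * v k).det
      = A.det + ε * ∑ i, u i * (A.updateRow i v).det := by
  classical
  set f : (m → ℝ) [⋀^m]→ₗ[ℝ] ℝ := Matrix.detRowAlternating with hf
  set B : Matrix m m ℝ := Matrix.of (fun i k => ε * u i * v k) with hB
  have hBrow : ∀ i, B i = (ε * u i) • v := by
    intro i; funext k; simp [hB, Pi.smul_apply, mul_assoc]
  have hmat : (Matrix.of fun i k => A i k + ε * u i * v k) = B + A := by
    ext i k; simp [hB, add_comm]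
  rw [hmat]
  have hadd : (B + A).det = ∑ s : Finset m, f (s.piecewise B A) := by
    exact f.map_add_univ B A
  rw [hadd]
  have h0 : ∀ s : Finset m, s ∈ Finset.univ → ¬ s.card ≤ 1 → f (s.piecewise B A) = 0 := by
    intro s _ hs
    obtain ⟨i, hi, i', hi', hne⟩ := Finset.one_lt_card.mp (show 1 < s.card by omega)
    set M := s.piecewise B A with hM
    have hMi : M i = (ε * u i) • v := by
      rw [hM]; exact (s.piecewise_eq_of_mem (B : m → m → ℝ) A hi).trans (hBrow i)
    have hMi' : M i' = (ε * u i') • v := by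
      rw [hM]; exact (s.piecewise_eq_of_mem (B : m → m → ℝ) A hi').trans (hBrow i')
    have step1 : f M = (ε * u i') • f (Function.update M i' v) := by
      conv_lhs => rw [← Function.update_eq_self i' M, hMi']
      exact f.map_update_smul M i' _ v
    have hrow : Function.update M i' v i = (ε * u i) • v := by
      rw [Function.update_of_ne hne]; exact hMi
    have step2 : f (Function.update M i' v)
        = (ε * u i) • f (Function.update (Function.update M i' v) i v) := by
      conv_lhs => rw [← Function.update_eq_self i (Function.update M i' v), hrow]
      exact f.map_update_smul _ i _ v
    have hzero : f (Function.update (Function.update M i' v) i v) = 0 := by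
      apply f.map_eq_zero_of_eq _ (i := i) (j := i')
      · rw [Function.update_self, Function.update_of_ne hne.symm, Function.update_self]
      · exact hne
    rw [step1, step2, hzero, smul_zero, smul_zero]
  rw [← Finset.sum_filter_add_sum_filter_not Finset.univ (fun s => s.card ≤ 1),
    Finset.sum_eq_zero (fun s hs => h0 s (Finset.mem_of_mem_filter s hs)
      (Finset.mem_filter.mp hs).2), add_zero]
  have hfilter : Finset.univ.filter (fun s : Finset m => s.card ≤ 1)
      = insert ∅ (Finset.univ.image fun i : m => ({i} : Finset m)) := by
    ext s
    simp only [Finset.mem_filter, Finset.mem_univ, true_and, Finset.mem_insert,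
      Finset.mem_image, Nat.le_one_iff_eq_zero_or_eq_one, Finset.card_eq_zero,
      Finset.card_eq_one]
    constructor
    · rintro (rfl | ⟨a, rfl⟩)
      · exact Or.inl rfl
      · exact Or.inr ⟨a, rfl⟩
    · rintro (rfl | ⟨a, _, rfl⟩)
      · exact Or.inl rfl
      · exact Or.inr ⟨a, rfl⟩
  rw [hfilter, Finset.sum_insert (by simp), Finset.sum_image
    (fun a _ b _ h => Finset.singleton_injective h)]
  have hempty : f ((∅ : Finset m).piecewise B A) = A.det := by
    exact congrArg f (Finset.piecewise_empty (B : m → m → ℝ) A)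
  have hsingle : ∀ i : m, f (({i} : Finset m).piecewise B A)
      = ε * (u i * (A.updateRow i v).det) := by
    intro i
    rw [show ({i} : Finset m).piecewise B A = Function.update (A : m → m → ℝ) i (B i) from
      Finset.piecewise_singleton _ _ _, hBrow i]
    have := f.map_update_smul (A : m → m → ℝ) i (ε * u i) v
    rw [this]
    have : f (Function.update (A : m → m → ℝ) i v) = (A.updateRow i v).det := rfl
    rw [this, smul_eq_mul]; ring
  rw [hempty, Finset.sum_congr rfl (fun i _ => hsingle i), ← Finset.mul_sum]

/-- Robust non-degeneracy is preserved by the reversal of a reaction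
(for robustly `P₀` networks without catalytic reactions). -/
theorem nondeg_reversal (n ν : ℕ) (α β : Matrix (Fin n) (Fin ν) ℕ)
    (hcat : ∀ i j, ¬(0 < α i j ∧ 0 < β i j))
    (j : Fin ν)
    (αt βt : Matrix (Fin n) (Fin (ν + 1)) ℕ)
    (hαt : ∀ i (k : Fin ν), αt i k.castSucc = α i k)
    (hαtl : ∀ i, αt i (Fin.last ν) = β i j)
    (hβt : ∀ i (k : Fin ν), βt i k.castSucc = β i k)
    (hβtl : ∀ i, βt i (Fin.last ν) = α i j)
    (hP0 : ∀ V, admissible α V → ∀ I : Finset (Fin n),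
      0 ≤ principalMinor (-(gam α β * V)) I)
    (hND : ∀ V, admissible α V →
      sumMinors (gam α β).rank (-(gam α β * V)) ≠ 0)
    (hP0t : ∀ V, admissible αt V → ∀ I : Finset (Fin n),
      0 ≤ principalMinor (-(gam αt βt * V)) I) :
    ∀ V, admissible αt V →
      sumMinors (gam αt βt).rank (-(gam αt βt * V)) ≠ 0 := by
  intro Vt hVt
  -- rank equality
  have hrank : (gam αt βt).rank = (gam α β).rank := by
    have hcols : ∀ k : Fin ν, (gam αt βt)ᵀ k.castSucc = (gam α β)ᵀ k := by
      intro k; funext i; simp [gam, Matrix.transpose_apply, hαt, hβt]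
    have hlast : (gam αt βt)ᵀ (Fin.last ν) = -((gam α β)ᵀ j) := by
      funext i; simp [gam, Matrix.transpose_apply, hαtl, hβtl]
    have hspan : Submodule.span ℝ (Set.range (gam αt βt)ᵀ)
        = Submodule.span ℝ (Set.range (gam α β)ᵀ) := by
      apply le_antisymm
      · rw [Submodule.span_le]
        rintro x ⟨k, rfl⟩
        refine Fin.lastCases ?_ ?_ k
        · rw [hlast]
          exact Submodule.neg_mem _ (Submodule.subset_span ⟨j, rfl⟩)
        · intro k'
          rw [hcols]
          exact Submodule.subset_span ⟨k', rfl⟩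
      · rw [Submodule.span_le]
        rintro x ⟨k, rfl⟩
        rw [← hcols k]
        exact Submodule.subset_span ⟨k.castSucc, rfl⟩
    rw [Matrix.rank_eq_finrank_span_cols, Matrix.rank_eq_finrank_span_cols]
    exact congrArg (fun S : Submodule ℝ (Fin n → ℝ) => Module.finrank ℝ S) hspan
  -- the restricted matrix
  set V : Matrix (Fin ν) (Fin n) ℝ := Matrix.of fun k i => Vt k.castSucc i with hVdef
  have hV : admissible α V := by
    intro i k
    refine ⟨fun h => (hVt i k.castSucc).1 (by rw [hαt]; exact h),
            fun h => (hVt i k.castSucc).2 (by rw [hαt]; exact h)⟩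
  -- scaled family
  set W : ℝ → Matrix (Fin (ν + 1)) (Fin n) ℝ :=
    fun ε => Matrix.of fun k i => if k = Fin.last ν then ε * Vt k i else Vt k i with hWdef
  have hW1 : W 1 = Vt := by
    ext k i; by_cases hk : k = Fin.last ν <;> simp [hWdef, hk]
  have hW2adm : admissible αt (W 2) := by
    intro i k
    constructor
    · intro h
      have hp := (hVt i k).1 h
      by_cases hk : k = Fin.last ν
      · simp only [hWdef, Matrix.of_apply, if_pos hk]; linarith
      · simp only [hWdef, Matrix.of_apply, if_neg hk]; exact hp
    · intro h
      have hz := (hVt i k).2 h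
      by_cases hk : k = Fin.last ν
      · subst hk; simp [hWdef, hz]
      · simp [hWdef, hk, hz]
  -- matrix identity
  have hmat : ∀ ε : ℝ, -(gam αt βt * W ε) = Matrix.of fun i i' =>
      (-(gam α β * V)) i i' + ε * (gam α β i j) * (Vt (Fin.last ν) i') := by
    intro ε; ext i i'
    simp only [Matrix.neg_apply, Matrix.mul_apply, Matrix.of_apply]
    rw [Fin.sum_univ_castSucc]
    have h1 : ∀ k : Fin ν,
        gam αt βt i k.castSucc * W ε k.castSucc i' = gam α β i k * V k i' := by
      intro k
      have hne : (k.castSucc : Fin (ν + 1)) ≠ Fin.last ν := (Fin.castSucc_lt_last k).ne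
      simp [hWdef, hVdef, hne, gam, hαt, hβt]
    have h2 : gam αt βt i (Fin.last ν) * W ε (Fin.last ν) i'
        = -(gam α β i j) * (ε * Vt (Fin.last ν) i') := by
      simp [hWdef, gam, hαtl, hβtl]
    rw [Finset.sum_congr rfl (fun k _ => h1 k), h2]
    ring
  -- principal minor identity
  have hminor : ∀ (ε : ℝ) (I : Finset (Fin n)),
      principalMinor (-(gam αt βt * W ε)) I
        = principalMinor (-(gam α β * V)) I
          + ε * (∑ a : {x // x ∈ I}, (gam α β a.1 j) *
              ((((-(gam α β * V)).submatrix (fun b : {x // x ∈ I} => b.1)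
                  (fun b : {x // x ∈ I} => b.1)).updateRow a
                  (fun b : {x // x ∈ I} => Vt (Fin.last ν) b.1)).det)) := by
    intro ε I
    unfold principalMinor
    rw [hmat ε]
    have hsub : ((Matrix.of fun i i' => (-(gam α β * V)) i i'
          + ε * (gam α β i j) * (Vt (Fin.last ν) i')).submatrix
          (fun c : {x // x ∈ I} => c.1) (fun c : {x // x ∈ I} => c.1))
        = Matrix.of fun a b : {x // x ∈ I} =>
            ((-(gam α β * V)).submatrix (fun b : {x // x ∈ I} => b.1)
              (fun b : {x // x ∈ I} => b.1)) a b
            + ε * (gam α β a.1 j) * (Vt (Fin.last ν) b.1) := by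
      ext a b; simp [Matrix.submatrix_apply]
    rw [hsub, det_add_aux]
  -- gather constants
  set p0 : ℝ := sumMinors (gam α β).rank (-(gam α β * V)) with hp0def
  set C : ℝ := ∑ I ∈ Finset.univ.powersetCard (gam α β).rank,
      (∑ a : {x // x ∈ I}, (gam α β a.1 j) *
        ((((-(gam α β * V)).submatrix (fun b : {x // x ∈ I} => b.1)
            (fun b : {x // x ∈ I} => b.1)).updateRow a
            (fun b : {x // x ∈ I} => Vt (Fin.last ν) b.1)).det)) with hCdef
  have hsum : ∀ ε : ℝ, sumMinors (gam α β).rank (-(gam αt βt * W ε)) = p0 + ε * C := by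
    intro ε
    unfold sumMinors
    rw [Finset.sum_congr rfl (fun I _ => hminor ε I), Finset.sum_add_distrib,
      ← Finset.mul_sum]
    rfl
  have hp0pos : 0 < p0 := by
    rcases lt_or_eq_of_le (Finset.sum_nonneg fun I _ => hP0 V hV I) with h | h
    · exact h
    · exact absurd h.symm (hND V hV)
  have hW2nn : 0 ≤ sumMinors (gam α β).rank (-(gam αt βt * W 2)) := by
    exact Finset.sum_nonneg fun I _ => hP0t (W 2) hW2adm I
  intro hcontra
  rw [hrank, ← hW1] at hcontra
  have h1 := hsum 1
  have h2 := hsum 2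
  rw [hcontra] at h1
  rw [h2] at hW2nn
  linarith
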